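/- arXiv:1709.01434 — 5 statements merged into one kernel-verified Lean document; each statement's English description precedes it below -/
import Mathlib

section
/- Let n ≥ 1, let f_1, ..., f_n : ℝ^d → ℝ each be differentiable with L-Lipschitz gradient (L > 0), and let f = (1/n)∑_{i=1}^n f_i. Fix x̃ ∈ ℝ^d and η = 1/(4 L n^{2/3}), set m = n, and for an index sequence σ = (i_0, ..., i_{m−1}) ∈ {1,...,n}^m define iterates x_0^σ = x̃ and x_{t+1}^σ = x_t^σ − η(∇f_{i_t}(x_t^σ) − ∇f_{i_t}(x̃) + ∇f(x̃)). Then for every j ∈ {0, 1, ..., m}, the average over all n^m index sequences satisfies (1/n^m) ∑_σ f(x_j^σ) ≤ f(x̃). -/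
open InnerProductSpace

variable {E : Type*} [NormedAddCommGroup E] [InnerProductSpace ℝ E] [CompleteSpace E]

local notation "⟪" x ", " y "⟫" => @inner ℝ _ _ x y

-- gradient gives inner product with fderiv
lemma grad_inner (h : E → ℝ) (x v : E) (hd : DifferentiableAt ℝ h x) :
    fderiv ℝ h x v = ⟪gradient h x, v⟫ := by
  have := hd.hasGradientAt
  rw [HasGradientAt, HasGradientAtFilter] at this
  have : fderiv ℝ h x = toDual ℝ E (gradient h x) := HasFDerivAt.fderiv this
  rw [this]
  simp [toDual_apply_apply]

-- derivative of t ↦ h (x + t • v)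
lemma curve_deriv (h : E → ℝ) (hd : Differentiable ℝ h) (x v : E) (t : ℝ) :
    HasDerivAt (fun s : ℝ => h (x + s • v)) ⟪gradient h (x + t • v), v⟫ t := by
  have hc : HasDerivAt (fun s : ℝ => x + s • v) v t := by
    simpa using ((hasDerivAt_id t).smul_const v).const_add x
  have hg := (hd (x + t • v)).hasGradientAt
  have hf : HasFDerivAt h (toDual ℝ E (gradient h (x + t • v))) (x + t • v) := hg.hasFDerivAt
  have := hf.comp_hasDerivAt t hc
  simpa [toDual_apply_apply, Function.comp_def] using this

/-- Descent lemma for L-smooth functions. -/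
lemma descent_lemma (h : E → ℝ) (hd : Differentiable ℝ h) (L : ℝ) (hL : 0 ≤ L)
    (hlip : ∀ a b, ‖gradient h a - gradient h b‖ ≤ L * ‖a - b‖) (x y : E) :
    h y ≤ h x + ⟪gradient h x, y - x⟫ + L / 2 * ‖y - x‖ ^ 2 := by
  set v := y - x with hv
  set ψ : ℝ → ℝ := fun t => h (x + t • v) - t * ⟪gradient h x, v⟫ - L * t ^ 2 * ‖v‖ ^ 2 / 2 with hψ
  have hψd : ∀ t : ℝ, HasDerivAt ψ
      (⟪gradient h (x + t • v), v⟫ - ⟪gradient h x, v⟫ - L * t * ‖v‖ ^ 2) t := by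
    intro t
    have h1 := curve_deriv h hd x v t
    have h2 : HasDerivAt (fun s : ℝ => s * ⟪gradient h x, v⟫) ⟪gradient h x, v⟫ t := by
      simpa using (hasDerivAt_id t).mul_const ⟪gradient h x, v⟫
    have h3 : HasDerivAt (fun s : ℝ => L * s ^ 2 * ‖v‖ ^ 2 / 2) (L * t * ‖v‖ ^ 2) t := by
      have : HasDerivAt (fun s : ℝ => s ^ 2) (2 * t) t := by
        simpa using hasDerivAt_pow 2 t
      have := ((this.const_mul L).mul_const (‖v‖ ^ 2)).div_const 2
      rw [show L * t * ‖v‖ ^ 2 = L * (2 * t) * ‖v‖ ^ 2 / 2 by ring]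
      exact this
    exact (h1.sub h2).sub h3
  have hmono : ψ 1 ≤ ψ 0 := by
    have hcont : ContinuousOn ψ (Set.Icc 0 1) := by
      intro t _; exact (hψd t).continuousAt.continuousWithinAt
    have hderiv : ∀ t ∈ interior (Set.Icc (0:ℝ) 1), deriv ψ t ≤ 0 := by
      intro t ht
      rw [interior_Icc] at ht
      rw [(hψd t).deriv]
      have key : ⟪gradient h (x + t • v), v⟫ - ⟪gradient h x, v⟫ ≤ L * t * ‖v‖ ^ 2 := by
        calc ⟪gradient h (x + t • v), v⟫ - ⟪gradient h x, v⟫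
            = ⟪gradient h (x + t • v) - gradient h x, v⟫ := by
              rw [inner_sub_left]
          _ ≤ ‖gradient h (x + t • v) - gradient h x‖ * ‖v‖ :=
              real_inner_le_norm _ _
          _ ≤ (L * ‖(x + t • v) - x‖) * ‖v‖ := by
              have := hlip (x + t • v) x
              exact mul_le_mul_of_nonneg_right this (norm_nonneg v)
          _ ≤ L * t * ‖v‖ ^ 2 := by
              have : ‖(x + t • v) - x‖ = |t| * ‖v‖ := by
                simp [norm_smul, abs_of_nonneg, Real.norm_eq_abs]
              rw [this, abs_of_nonneg (le_of_lt ht.1)]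
              ring_nf
              exact le_refl _
      linarith
    have hdiffOn : DifferentiableOn ℝ ψ (interior (Set.Icc (0:ℝ) 1)) :=
      fun t _ => (hψd t).differentiableAt.differentiableWithinAt
    exact antitoneOn_of_deriv_nonpos (convex_Icc (0:ℝ) 1) hcont hdiffOn hderiv
      (Set.mem_Icc.mpr ⟨le_refl 0, zero_le_one⟩)
      (Set.mem_Icc.mpr ⟨zero_le_one, le_refl 1⟩) zero_le_one
  have h0 : ψ 0 = h x := by simp [hψ]
  have h1 : ψ 1 = h y - ⟪gradient h x, v⟫ - L * ‖v‖ ^ 2 / 2 := by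
    simp [hψ, hv]
  rw [h0, h1] at hmono
  have : L * ‖v‖ ^ 2 / 2 = L / 2 * ‖v‖ ^ 2 := by ring
  linarith [hmono]

lemma hasGradientAt_const_mul_sum {n : ℕ} (c : ℝ) (f : Fin n → E → ℝ) (x : E)
    (hdiff : ∀ i, DifferentiableAt ℝ (f i) x) :
    HasGradientAt (fun y => c * ∑ i, f i y) (c • ∑ i, gradient (f i) x) x := by
  have hsum : HasFDerivAt (fun y => ∑ i, f i y)
      (∑ i, toDual ℝ E (gradient (f i) x)) x :=
    HasFDerivAt.fun_sum (fun i _ => (hdiff i).hasGradientAt.hasFDerivAt)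
  have := hsum.const_mul c
  rw [hasGradientAt_iff_hasFDerivAt]
  have e : toDual ℝ E (c • ∑ i, gradient (f i) x) = c • ∑ i, toDual ℝ E (gradient (f i) x) := by
    rw [map_smulₛₗ, map_sum]; rfl
  rw [e]
  exact this

lemma gradient_const_mul_sum {n : ℕ} (c : ℝ) (f : Fin n → E → ℝ) (x : E)
    (hdiff : ∀ i, DifferentiableAt ℝ (f i) x) :
    gradient (fun y => c * ∑ i, f i y) x = c • ∑ i, gradient (f i) x :=
  (hasGradientAt_const_mul_sum c f x hdiff).gradient

lemma var_bound {n : ℕ} (a : Fin n → E) (abar c : E) (h : ∑ i, a i = (n : ℝ) • abar) :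
    ∑ i, ‖a i - abar + c‖ ^ 2 ≤ ∑ i, ‖a i‖ ^ 2 + (n : ℝ) * ‖c‖ ^ 2 := by
  have e1 : ∀ i, ‖a i - abar + c‖ ^ 2
      = ‖a i - abar‖ ^ 2 + 2 * ⟪a i - abar, c⟫ + ‖c‖ ^ 2 := fun i =>
    norm_add_sq_real _ _
  have e2 : ∀ i, ‖a i - abar‖ ^ 2 = ‖a i‖ ^ 2 - 2 * ⟪a i, abar⟫ + ‖abar‖ ^ 2 := fun i =>
    norm_sub_sq_real _ _
  have s1 : ∑ i, ⟪a i - abar, c⟫ = 0 := by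
    rw [← sum_inner]
    have : ∑ i, (a i - abar) = 0 := by
      rw [Finset.sum_sub_distrib, h]
      simp [Nat.cast_smul_eq_nsmul]
    rw [this, inner_zero_left]
  have s2 : ∑ i, ⟪a i, abar⟫ = (n : ℝ) * ‖abar‖ ^ 2 := by
    rw [← sum_inner, h, real_inner_smul_left, real_inner_self_eq_norm_sq]
  calc ∑ i, ‖a i - abar + c‖ ^ 2
      = ∑ i, (‖a i - abar‖ ^ 2 + 2 * ⟪a i - abar, c⟫ + ‖c‖ ^ 2) := by
        exact Finset.sum_congr rfl (fun i _ => e1 i)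
    _ = ∑ i, ‖a i - abar‖ ^ 2 + 2 * ∑ i, ⟪a i - abar, c⟫ + (n : ℝ) * ‖c‖ ^ 2 := by
        rw [Finset.sum_add_distrib, Finset.sum_add_distrib, ← Finset.mul_sum]
        simp [Finset.card_univ]
    _ = ∑ i, ‖a i - abar‖ ^ 2 + (n : ℝ) * ‖c‖ ^ 2 := by rw [s1]; ring
    _ = ∑ i, ‖a i‖ ^ 2 - 2 * ((n:ℝ) * ‖abar‖ ^ 2) + (n : ℝ) * ‖abar‖ ^ 2
        + (n : ℝ) * ‖c‖ ^ 2 := by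
        rw [show ∑ i, ‖a i - abar‖ ^ 2 = ∑ i, (‖a i‖ ^ 2 - 2 * ⟪a i, abar⟫ + ‖abar‖ ^ 2) from
          Finset.sum_congr rfl (fun i _ => e2 i)]
        rw [Finset.sum_add_distrib, Finset.sum_sub_distrib, ← Finset.mul_sum, s2]
        simp [Finset.card_univ]
    _ ≤ ∑ i, ‖a i‖ ^ 2 + (n : ℝ) * ‖c‖ ^ 2 := by
        nlinarith [sq_nonneg ‖abar‖, Nat.cast_nonneg (α := ℝ) n, norm_nonneg abar,
          mul_nonneg (Nat.cast_nonneg (α := ℝ) n) (sq_nonneg ‖abar‖)]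
set_option maxHeartbeats 4000000 in
/-- Property G.1 in Lemma 1: within an SVRG epoch of length `m = n` with step size
`η = 1/(4 L n^{2/3})`, the expected objective value at every inner iterate does not
exceed the value at the snapshot, the expectation being the average over all `n^n`
index sequences. -/
theorem stmt2 {d n : ℕ} (hn : 1 ≤ n) (L : ℝ) (hL : 0 < L)
    (f : Fin n → EuclideanSpace ℝ (Fin d) → ℝ)
    (hdiff : ∀ i, Differentiable ℝ (f i))
    (hlip : ∀ i, ∀ a b, ‖gradient (f i) a - gradient (f i) b‖ ≤ L * ‖a - b‖)
    (F : EuclideanSpace ℝ (Fin d) → ℝ)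
    (hF : F = fun y => (1 / (n : ℝ)) * ∑ i, f i y)
    (η : ℝ) (hη : η = 1 / (4 * L * (n : ℝ) ^ ((2 : ℝ) / 3)))
    (xtilde : EuclideanSpace ℝ (Fin d))
    (X : (Fin n → Fin n) → ℕ → EuclideanSpace ℝ (Fin d))
    (hX0 : ∀ σ, X σ 0 = xtilde)
    (hXstep : ∀ σ (t : ℕ) (ht : t < n),
      X σ (t + 1) = X σ t - η • (gradient (f (σ ⟨t, ht⟩)) (X σ t)
        - gradient (f (σ ⟨t, ht⟩)) xtilde + gradient F xtilde)) :
    ∀ j ≤ n, (1 / (n : ℝ) ^ n) * ∑ σ : Fin n → Fin n, F (X σ j) ≤ F xtilde := by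
  classical
  have hn0 : (0:ℝ) < (n:ℝ) := by exact_mod_cast Nat.pos_of_ne_zero (by omega)
  -- differentiability of F
  have hFdiff : Differentiable ℝ F := by
    rw [hF]
    exact Differentiable.const_mul (Differentiable.fun_sum fun i _ => hdiff i) _
  -- gradient of F as an average
  have hGx : ∀ x, gradient F x = (1 / (n:ℝ)) • ∑ i, gradient (f i) x := by
    intro x; rw [hF]
    exact gradient_const_mul_sum _ f x (fun i => (hdiff i).differentiableAt)
  have hGsum : ∀ x, ∑ i, gradient (f i) x = (n:ℝ) • gradient F x := by
    intro x
    rw [hGx x, smul_smul, mul_one_div, div_self (ne_of_gt hn0), one_smul]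
  -- F is L-smooth
  have hGlip : ∀ a b, ‖gradient F a - gradient F b‖ ≤ L * ‖a - b‖ := by
    intro a b
    rw [hGx a, hGx b, ← smul_sub, ← Finset.sum_sub_distrib, norm_smul]
    have h1 : ‖∑ i, (gradient (f i) a - gradient (f i) b)‖
        ≤ ∑ i : Fin n, (L * ‖a - b‖) := by
      refine le_trans (norm_sum_le _ _) (Finset.sum_le_sum fun i _ => hlip i a b)
    rw [Finset.sum_const, Finset.card_univ, Fintype.card_fin] at h1
    have : ‖(1 / (n:ℝ))‖ = 1 / (n:ℝ) := by
      rw [Real.norm_eq_abs, abs_of_pos (by positivity)]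
    rw [this]
    calc 1 / (n:ℝ) * ‖∑ i, (gradient (f i) a - gradient (f i) b)‖
        ≤ 1 / (n:ℝ) * ((n:ℝ) * (L * ‖a - b‖)) := by
          apply mul_le_mul_of_nonneg_left _ (by positivity)
          simpa [nsmul_eq_mul] using h1
      _ = L * ‖a - b‖ := by field_simp
  -- agreement: X σ t depends only on the first t coordinates of σ
  have agree : ∀ t, t ≤ n → ∀ σ σ' : Fin n → Fin n,
      (∀ i : Fin n, (i : ℕ) < t → σ i = σ' i) → X σ t = X σ' t := by
    intro t
    induction t with
    | zero => intro _ σ σ' _; rw [hX0, hX0]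
    | succ t ih =>
      intro ht σ σ' hagree
      have ht' : t < n := by omega
      rw [hXstep σ t ht', hXstep σ' t ht']
      have h1 : X σ t = X σ' t := ih (by omega) σ σ' (fun i hi => hagree i (by omega))
      have h2 : σ ⟨t, ht'⟩ = σ' ⟨t, ht'⟩ := hagree ⟨t, ht'⟩ (by simp)
      rw [h1, h2]
  -- key conditional-expectation identity
  have key : ∀ (t : ℕ) (ht : t < n) (Ψ : EuclideanSpace ℝ (Fin d) → Fin n → ℝ),
      (n:ℝ) * ∑ σ : Fin n → Fin n, Ψ (X σ t) (σ ⟨t, ht⟩)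
        = ∑ σ : Fin n → Fin n, ∑ i, Ψ (X σ t) i := by
    intro t ht Ψ
    set p : Fin n := ⟨t, ht⟩ with hp
    set e := Equiv.funSplitAt p (Fin n) with he
    have hXeq : ∀ (k : Fin n) (rest : {j : Fin n // j ≠ p} → Fin n),
        X (e.symm (k, rest)) t = X (e.symm (p, rest)) t := by
      intro k rest
      apply agree t (le_of_lt ht)
      intro i hi
      have hne : i ≠ p := by
        intro hcontra
        rw [hcontra] at hi
        simp only [hp] at hi
        omega
      simp [he, Equiv.funSplitAt, Equiv.piSplitAt, dif_neg hne]
    have happ : ∀ (k : Fin n) (rest : {j : Fin n // j ≠ p} → Fin n),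
        (e.symm (k, rest)) p = k := by
      intro k rest; simp [he, Equiv.funSplitAt, Equiv.piSplitAt]
    have h1 : ∑ σ : Fin n → Fin n, Ψ (X σ t) (σ p)
        = ∑ q : Fin n × ({j : Fin n // j ≠ p} → Fin n),
            Ψ (X (e.symm q) t) ((e.symm q) p) :=
      (Equiv.sum_comp e.symm _).symm
    have h2 : ∑ σ : Fin n → Fin n, ∑ i, Ψ (X σ t) i
        = ∑ q : Fin n × ({j : Fin n // j ≠ p} → Fin n),
            ∑ i, Ψ (X (e.symm q) t) i :=
      (Equiv.sum_comp e.symm _).symm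
    rw [h1, h2, Fintype.sum_prod_type, Fintype.sum_prod_type]
    have hLrw : ∑ k : Fin n, ∑ rest : {j : Fin n // j ≠ p} → Fin n,
          Ψ (X (e.symm (k, rest)) t) ((e.symm (k, rest)) p)
        = ∑ rest : {j : Fin n // j ≠ p} → Fin n, ∑ k : Fin n,
          Ψ (X (e.symm (p, rest)) t) k := by
      rw [Finset.sum_comm]
      exact Finset.sum_congr rfl fun rest _ => Finset.sum_congr rfl fun k _ => by
        rw [hXeq, happ]
    have hRrw : ∑ k : Fin n, ∑ rest : {j : Fin n // j ≠ p} → Fin n,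
          ∑ i, Ψ (X (e.symm (k, rest)) t) i
        = (n:ℝ) * ∑ rest : {j : Fin n // j ≠ p} → Fin n, ∑ i,
          Ψ (X (e.symm (p, rest)) t) i := by
      have : ∀ k : Fin n, ∑ rest : {j : Fin n // j ≠ p} → Fin n,
          ∑ i, Ψ (X (e.symm (k, rest)) t) i
          = ∑ rest : {j : Fin n // j ≠ p} → Fin n, ∑ i,
            Ψ (X (e.symm (p, rest)) t) i := fun k =>
        Finset.sum_congr rfl fun rest _ => by rw [hXeq]
      rw [Finset.sum_congr rfl (fun k _ => this k), Finset.sum_const,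
        Finset.card_univ, Fintype.card_fin, nsmul_eq_mul]
    rw [hLrw, hRrw]
  -- the SVRG direction
  set v : Fin n → EuclideanSpace ℝ (Fin d) → EuclideanSpace ℝ (Fin d) :=
    fun i x => gradient (f i) x - gradient (f i) xtilde + gradient F xtilde with hv
  have hvsum : ∀ x, ∑ i, v i x = (n:ℝ) • gradient F x := by
    intro x
    simp only [hv]
    rw [Finset.sum_add_distrib, Finset.sum_sub_distrib, hGsum x, hGsum xtilde,
      Finset.sum_const, Finset.card_univ, Fintype.card_fin]
    simp only [← Nat.cast_smul_eq_nsmul ℝ]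
    abel
  set S : ℕ → ℝ := fun t => ∑ σ : Fin n → Fin n, F (X σ t) with hS
  set D : ℕ → ℝ := fun t => ∑ σ : Fin n → Fin n, ‖X σ t - xtilde‖ ^ 2 with hD
  set N : ℕ → ℝ := fun t => ∑ σ : Fin n → Fin n, ‖gradient F (X σ t)‖ ^ 2 with hN
  have hDnn : ∀ t, 0 ≤ D t := fun t => Finset.sum_nonneg fun σ _ => sq_nonneg _
  have hNnn : ∀ t, 0 ≤ N t := fun t => Finset.sum_nonneg fun σ _ => sq_nonneg _
  -- (a)
  have hA : ∀ (t : ℕ) (ht : t < n),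
      ∑ σ : Fin n → Fin n, ⟪gradient F (X σ t), v (σ ⟨t, ht⟩) (X σ t)⟫ = N t := by
    intro t ht
    have hk := key t ht (fun x i => ⟪gradient F x, v i x⟫)
    have hr : ∀ x, ∑ i, ⟪gradient F x, v i x⟫ = (n:ℝ) * ‖gradient F x‖ ^ 2 := by
      intro x
      rw [← inner_sum, hvsum x, real_inner_smul_right, real_inner_self_eq_norm_sq]
    rw [Finset.sum_congr rfl (fun σ _ => hr _), ← Finset.mul_sum] at hk
    exact mul_left_cancel₀ (ne_of_gt hn0) hk
  -- (b)
  have hB : ∀ (t : ℕ) (ht : t < n),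
      ∑ σ : Fin n → Fin n, ⟪X σ t - xtilde, v (σ ⟨t, ht⟩) (X σ t)⟫
        = ∑ σ : Fin n → Fin n, ⟪X σ t - xtilde, gradient F (X σ t)⟫ := by
    intro t ht
    have hk := key t ht (fun x i => ⟪x - xtilde, v i x⟫)
    have hr : ∀ x, ∑ i, ⟪x - xtilde, v i x⟫
        = (n:ℝ) * ⟪x - xtilde, gradient F x⟫ := by
      intro x
      rw [← inner_sum, hvsum x, real_inner_smul_right]
    rw [Finset.sum_congr rfl (fun σ _ => hr _), ← Finset.mul_sum] at hk
    exact mul_left_cancel₀ (ne_of_gt hn0) hk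
  -- (c)
  have hC : ∀ (t : ℕ) (ht : t < n),
      ∑ σ : Fin n → Fin n, ‖v (σ ⟨t, ht⟩) (X σ t)‖ ^ 2 ≤ L ^ 2 * D t + N t := by
    intro t ht
    have hk := key t ht (fun x i => ‖v i x‖ ^ 2)
    have hpt : ∀ x, ∑ i, ‖v i x‖ ^ 2
        ≤ (n:ℝ) * (L ^ 2 * ‖x - xtilde‖ ^ 2) + (n:ℝ) * ‖gradient F x‖ ^ 2 := by
      intro x
      have hvb := var_bound (fun i => gradient (f i) x - gradient (f i) xtilde)
        (gradient F x - gradient F xtilde) (gradient F x)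
        (by rw [Finset.sum_sub_distrib, hGsum x, hGsum xtilde, smul_sub])
      have hform : ∀ i : Fin n, v i x
          = (gradient (f i) x - gradient (f i) xtilde)
            - (gradient F x - gradient F xtilde) + gradient F x := by
        intro i; simp only [hv]; abel
      have h2 : ∑ i : Fin n, ‖gradient (f i) x - gradient (f i) xtilde‖ ^ 2
          ≤ (n:ℝ) * (L ^ 2 * ‖x - xtilde‖ ^ 2) := by
        calc ∑ i : Fin n, ‖gradient (f i) x - gradient (f i) xtilde‖ ^ 2
            ≤ ∑ i : Fin n, (L * ‖x - xtilde‖) ^ 2 := by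
              refine Finset.sum_le_sum fun i _ => ?_
              have := hlip i x xtilde
              exact pow_le_pow_left₀ (norm_nonneg _) this 2
          _ = (n:ℝ) * (L ^ 2 * ‖x - xtilde‖ ^ 2) := by
              rw [Finset.sum_const, Finset.card_univ, Fintype.card_fin, nsmul_eq_mul]
              ring
      calc ∑ i, ‖v i x‖ ^ 2
          = ∑ i, ‖(gradient (f i) x - gradient (f i) xtilde)
              - (gradient F x - gradient F xtilde) + gradient F x‖ ^ 2 :=
            Finset.sum_congr rfl fun i _ => by rw [hform i]
        _ ≤ ∑ i, ‖gradient (f i) x - gradient (f i) xtilde‖ ^ 2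
              + (n:ℝ) * ‖gradient F x‖ ^ 2 := hvb
        _ ≤ (n:ℝ) * (L ^ 2 * ‖x - xtilde‖ ^ 2) + (n:ℝ) * ‖gradient F x‖ ^ 2 := by
            linarith
    have hsum : ∑ σ : Fin n → Fin n, ∑ i, ‖v i (X σ t)‖ ^ 2
        ≤ (n:ℝ) * (L ^ 2 * D t + N t) := by
      calc ∑ σ : Fin n → Fin n, ∑ i, ‖v i (X σ t)‖ ^ 2
          ≤ ∑ σ : Fin n → Fin n, ((n:ℝ) * (L ^ 2 * ‖X σ t - xtilde‖ ^ 2)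
              + (n:ℝ) * ‖gradient F (X σ t)‖ ^ 2) :=
            Finset.sum_le_sum fun σ _ => hpt _
        _ = (n:ℝ) * (L ^ 2 * D t + N t) := by
            rw [Finset.sum_add_distrib, ← Finset.mul_sum, ← Finset.mul_sum,
              ← Finset.mul_sum]
            simp only [hD, hN]
            ring
    have hmul : (n:ℝ) * ∑ σ : Fin n → Fin n, ‖v (σ ⟨t, ht⟩) (X σ t)‖ ^ 2
        ≤ (n:ℝ) * (L ^ 2 * D t + N t) := by rw [hk]; exact hsum
    exact le_of_mul_le_mul_left hmul hn0
  -- numeric setup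
  set r : ℝ := (n:ℝ) ^ ((1:ℝ)/3) with hr
  have hr1 : 1 ≤ r := Real.one_le_rpow (by exact_mod_cast hn) (by norm_num)
  have hr0 : 0 < r := lt_of_lt_of_le one_pos hr1
  have hr3 : r ^ 3 = (n:ℝ) := by
    rw [hr, ← Real.rpow_natCast ((n:ℝ) ^ ((1:ℝ)/3)) 3, ← Real.rpow_mul (le_of_lt hn0)]
    norm_num
  have hr2 : (n:ℝ) ^ ((2:ℝ)/3) = r ^ 2 := by
    rw [hr, ← Real.rpow_natCast ((n:ℝ) ^ ((1:ℝ)/3)) 2, ← Real.rpow_mul (le_of_lt hn0)]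
    norm_num
  have hηval : η = 1 / (4 * L * r ^ 2) := by rw [hη, hr2]
  have hηpos : 0 < η := by rw [hηval]; positivity
  have hLη : L * η = 1 / (4 * r ^ 2) := by
    rw [hηval]; field_simp
  set β : ℝ := L / r with hβ
  have hβpos : 0 < β := by positivity
  set θ : ℝ := η * β + η ^ 2 * L ^ 2 with hθ
  have hθpos : 0 < θ := by positivity
  have hηβ : η * β = 1 / (4 * (n:ℝ)) := by
    rw [hηval, hβ, ← hr3]; field_simp
  have hη2L2 : η ^ 2 * L ^ 2 = 1 / (16 * r ^ 4) := by
    rw [hηval]; field_simp; ring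
  have hr4 : (n:ℝ) ≤ r ^ 4 := by
    rw [← hr3]
    calc r ^ 3 = r ^ 3 * 1 := by ring
      _ ≤ r ^ 3 * r := by
          apply mul_le_mul_of_nonneg_left hr1 (by positivity)
      _ = r ^ 4 := by ring
  have hnθ : (n:ℝ) * θ ≤ 5 / 16 := by
    rw [hθ, mul_add, hηβ, hη2L2]
    have h1 : (n:ℝ) * (1 / (4 * (n:ℝ))) = 1/4 := by field_simp
    have h2 : (n:ℝ) * (1 / (16 * r ^ 4)) ≤ 1/16 := by
      rw [mul_one_div, div_le_div_iff₀ (by positivity) (by norm_num)]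
      nlinarith [hr4]
    linarith
  clear_value r β θ
  -- a Bernoulli-type bound: (1+θ)^k ≤ 1 + 2 n θ for k ≤ n
  have hθ5 : θ ≤ 5/16 := by
    have h1 : (1:ℝ) ≤ (n:ℝ) := by exact_mod_cast hn
    have h2 : 1 * θ ≤ (n:ℝ) * θ := mul_le_mul_of_nonneg_right h1 (le_of_lt hθpos)
    linarith
  have hpow : ∀ k, k ≤ n → (1+θ) ^ k ≤ 1 + 2 * ((n:ℝ) * θ) := by
    intro k hk
    have hmono : (1+θ) ^ k ≤ (1+θ) ^ n :=
      pow_le_pow_right₀ (by linarith) hk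
    have hbern : 1 - (n:ℝ) * θ ≤ (1-θ) ^ n := by
      have := one_add_mul_le_pow (a := -θ) (by linarith) n
      calc 1 - (n:ℝ) * θ = 1 + (n:ℝ) * (-θ) := by ring
        _ ≤ (1 + -θ) ^ n := this
        _ = (1 - θ) ^ n := by ring_nf
    have hprod : (1+θ) ^ n * (1-θ) ^ n ≤ 1 := by
      rw [← mul_pow]
      have h1 : (1+θ) * (1-θ) = 1 - θ^2 := by ring
      rw [h1]
      exact pow_le_one₀ (by nlinarith) (by nlinarith)
    have hpn : (1+θ) ^ n ≤ 1 + 2 * ((n:ℝ) * θ) := by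
      set s := (n:ℝ) * θ with hs
      have hs0 : 0 < s := by positivity
      have hs5 : s ≤ 5/16 := hnθ
      have hp0 : (0:ℝ) ≤ (1+θ) ^ n := by positivity
      have h2 : (1+θ) ^ n * (1 - s) ≤ 1 :=
        le_trans (mul_le_mul_of_nonneg_left hbern hp0) hprod
      nlinarith
    linarith
  -- the Lyapunov coefficients
  set γ : ℝ := L ^ 3 * η ^ 2 / 2 with hγ
  have hγ0 : 0 ≤ γ := by positivity
  set c : ℕ → ℝ := fun t => γ * (((1+θ) ^ (n-t) - 1)/θ) with hc
  have hcnn : ∀ t, 0 ≤ c t := by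
    intro t
    apply mul_nonneg hγ0
    apply div_nonneg _ (le_of_lt hθpos)
    have : (1:ℝ) ≤ (1+θ) ^ (n-t) := one_le_pow₀ (by linarith)
    linarith
  have hcn : c n = 0 := by simp [hc]
  have hcrec : ∀ t, t < n → c t = γ + (1+θ) * c (t+1) := by
    intro t ht
    have hnt : n - t = (n - (t+1)) + 1 := by omega
    simp only [hc]
    rw [hnt, pow_succ]
    field_simp
    ring
  have hcb : ∀ t, c t ≤ L / (16 * r) := by
    intro t
    have h1 : (1+θ) ^ (n-t) - 1 ≤ 2 * ((n:ℝ) * θ) := by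
      have := hpow (n-t) (by omega)
      linarith
    have h2 : ((1+θ) ^ (n-t) - 1)/θ ≤ 2 * (n:ℝ) := by
      rw [div_le_iff₀ hθpos]
      calc (1+θ) ^ (n-t) - 1 ≤ 2 * ((n:ℝ) * θ) := h1
        _ = 2 * (n:ℝ) * θ := by ring
    calc c t ≤ γ * (2 * (n:ℝ)) := mul_le_mul_of_nonneg_left h2 hγ0
      _ = L ^ 3 * η ^ 2 * (n:ℝ) := by rw [hγ]; ring
      _ = L / (16 * r) := by
          have hη2 : η ^ 2 = 1 / (16 * L ^ 2 * r ^ 4) := by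
            rw [hηval]; field_simp; ring
          rw [hη2, ← hr3]
          field_simp
  -- per-step descent of S
  have hstepS : ∀ (t : ℕ) (ht : t < n),
      S (t+1) ≤ S t - η * N t + (L * η ^ 2 / 2) * (L ^ 2 * D t + N t) := by
    intro t ht
    have hper : ∀ σ : Fin n → Fin n, F (X σ (t+1))
        ≤ F (X σ t) - η * ⟪gradient F (X σ t), v (σ ⟨t, ht⟩) (X σ t)⟫
          + L / 2 * (η ^ 2 * ‖v (σ ⟨t, ht⟩) (X σ t)‖ ^ 2) := by
      intro σ
      have hd := descent_lemma F hFdiff L (le_of_lt hL) hGlip (X σ t) (X σ (t+1))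
      have hdiffeq : X σ (t+1) - X σ t = -(η • v (σ ⟨t, ht⟩) (X σ t)) := by
        rw [hXstep σ t ht]
        simp only [hv]
        abel
      rw [hdiffeq, inner_neg_right, real_inner_smul_right, norm_neg, norm_smul] at hd
      have hsq : (‖η‖ * ‖v (σ ⟨t, ht⟩) (X σ t)‖) ^ 2
          = η ^ 2 * ‖v (σ ⟨t, ht⟩) (X σ t)‖ ^ 2 := by
        rw [mul_pow, Real.norm_eq_abs, sq_abs]
      rw [hsq] at hd
      linarith
    calc S (t+1) ≤ ∑ σ : Fin n → Fin n, (F (X σ t)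
          - η * ⟪gradient F (X σ t), v (σ ⟨t, ht⟩) (X σ t)⟫
          + L / 2 * (η ^ 2 * ‖v (σ ⟨t, ht⟩) (X σ t)‖ ^ 2)) :=
        Finset.sum_le_sum fun σ _ => hper σ
      _ = S t - η * N t
          + (L * η ^ 2 / 2) * ∑ σ : Fin n → Fin n, ‖v (σ ⟨t, ht⟩) (X σ t)‖ ^ 2 := by
        rw [Finset.sum_add_distrib, Finset.sum_sub_distrib, ← Finset.mul_sum, hA t ht,
          ← Finset.mul_sum, ← Finset.mul_sum]
        simp only [hS]
        ring
      _ ≤ S t - η * N t + (L * η ^ 2 / 2) * (L ^ 2 * D t + N t) := by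
        have := mul_le_mul_of_nonneg_left (hC t ht) (show (0:ℝ) ≤ L * η ^ 2 / 2 by positivity)
        linarith
  -- per-step growth of D
  have hstepD : ∀ (t : ℕ) (ht : t < n),
      D (t+1) ≤ (1 + θ) * D t + (η / β + η ^ 2) * N t := by
    intro t ht
    have hper : ∀ σ : Fin n → Fin n, ‖X σ (t+1) - xtilde‖ ^ 2
        = ‖X σ t - xtilde‖ ^ 2 - 2 * (η * ⟪X σ t - xtilde, v (σ ⟨t, ht⟩) (X σ t)⟫)
          + η ^ 2 * ‖v (σ ⟨t, ht⟩) (X σ t)‖ ^ 2 := by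
      intro σ
      have hdiffeq : X σ (t+1) - xtilde
          = (X σ t - xtilde) - η • v (σ ⟨t, ht⟩) (X σ t) := by
        rw [hXstep σ t ht]
        simp only [hv]
        abel
      rw [hdiffeq, norm_sub_sq_real, real_inner_smul_right, norm_smul,
        mul_pow, Real.norm_eq_abs, sq_abs]
    have hsum : D (t+1) = D t
        - 2 * η * ∑ σ : Fin n → Fin n, ⟪X σ t - xtilde, gradient F (X σ t)⟫
        + η ^ 2 * ∑ σ : Fin n → Fin n, ‖v (σ ⟨t, ht⟩) (X σ t)‖ ^ 2 := by
      simp only [hD]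
      rw [Finset.sum_congr rfl (fun σ _ => hper σ), Finset.sum_add_distrib,
        Finset.sum_sub_distrib, ← Finset.mul_sum, ← Finset.mul_sum, hB t ht,
        ← Finset.mul_sum]
      ring
    have hptw : ∀ σ : Fin n → Fin n,
        - 2 * ⟪X σ t - xtilde, gradient F (X σ t)⟫
          ≤ β * ‖X σ t - xtilde‖ ^ 2 + (1/β) * ‖gradient F (X σ t)‖ ^ 2 := by
      intro σ
      set u := X σ t - xtilde
      set w := gradient F (X σ t)
      have h1 : -⟪u, w⟫ ≤ ‖u‖ * ‖w‖ := by
        have := real_inner_le_norm (-u) w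
        rw [inner_neg_left, norm_neg] at this
        linarith
      have h2 : 2 * β * (‖u‖ * ‖w‖) ≤ β ^ 2 * ‖u‖ ^ 2 + ‖w‖ ^ 2 := by
        nlinarith [sq_nonneg (β * ‖u‖ - ‖w‖)]
      have h4 : β * -⟪u, w⟫ ≤ β * (‖u‖ * ‖w‖) :=
        mul_le_mul_of_nonneg_left h1 (le_of_lt hβpos)
      have hfe : β * (β * ‖u‖ ^ 2 + 1 / β * ‖w‖ ^ 2) = β ^ 2 * ‖u‖ ^ 2 + ‖w‖ ^ 2 := by
        field_simp
      apply le_of_mul_le_mul_left _ hβpos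
      rw [hfe, mul_comm β (-2 * ⟪u, w⟫)]
      nlinarith [h2, h4]
    have hinner : - 2 * η * ∑ σ : Fin n → Fin n, ⟪X σ t - xtilde, gradient F (X σ t)⟫
        ≤ η * (β * D t + (1/β) * N t) := by
      have hsum2 : ∑ σ : Fin n → Fin n, (- 2 * ⟪X σ t - xtilde, gradient F (X σ t)⟫)
          ≤ β * D t + (1/β) * N t := by
        calc ∑ σ : Fin n → Fin n, (- 2 * ⟪X σ t - xtilde, gradient F (X σ t)⟫)
            ≤ ∑ σ : Fin n → Fin n, (β * ‖X σ t - xtilde‖ ^ 2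
                + (1/β) * ‖gradient F (X σ t)‖ ^ 2) :=
              Finset.sum_le_sum fun σ _ => hptw σ
          _ = β * D t + (1/β) * N t := by
              rw [Finset.sum_add_distrib, ← Finset.mul_sum, ← Finset.mul_sum]
        -- done
      calc - 2 * η * ∑ σ : Fin n → Fin n, ⟪X σ t - xtilde, gradient F (X σ t)⟫
          = η * ∑ σ : Fin n → Fin n, (- 2 * ⟪X σ t - xtilde, gradient F (X σ t)⟫) := by
            rw [Finset.mul_sum, Finset.mul_sum]
            exact Finset.sum_congr rfl fun σ _ => by ring
        _ ≤ η * (β * D t + (1/β) * N t) :=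
            mul_le_mul_of_nonneg_left hsum2 (le_of_lt hηpos)
    have hvsq := mul_le_mul_of_nonneg_left (hC t ht) (show (0:ℝ) ≤ η ^ 2 by positivity)
    rw [hsum]
    have hθexp : (1 + θ) * D t + (η / β + η ^ 2) * N t
        = D t + η * (β * D t + (1/β) * N t) + η ^ 2 * (L ^ 2 * D t + N t) := by
      rw [hθ]
      field_simp
      ring
    rw [hθexp]
    linarith
  clear_value S D N γ c
  -- coefficient bound
  have hr2ge : (1:ℝ) ≤ r ^ 2 := one_le_pow₀ hr1
  have hr3ge : (1:ℝ) ≤ r ^ 3 := one_le_pow₀ hr1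
  have hcoef : ∀ t, -η + L * η ^ 2 / 2 + c t * (η / β + η ^ 2) ≤ 0 := by
    intro t
    have hA0 : 0 ≤ η / β + η ^ 2 := by positivity
    have h1 : c t * (η / β + η ^ 2) ≤ (L / (16 * r)) * (η / β + η ^ 2) :=
      mul_le_mul_of_nonneg_right (hcb t) hA0
    have h2 : (L / (16 * r)) * (η / β + η ^ 2) = η / 16 + L * η ^ 2 / (16 * r) := by
      rw [hβ]
      field_simp
    have h3 : L * η ^ 2 = η / (4 * r ^ 2) := by
      have he : L * η ^ 2 = (L * η) * η := by ring
      rw [he, hLη]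
      field_simp
    have h4 : L * η ^ 2 / (16 * r) ≤ η / 64 := by
      rw [h3, div_div]
      exact div_le_div_of_nonneg_left (le_of_lt hηpos) (by norm_num)
        (by nlinarith [hr3ge, hr0, hr1])
    have h5 : L * η ^ 2 / 2 ≤ η / 8 := by
      rw [h3, div_div]
      exact div_le_div_of_nonneg_left (le_of_lt hηpos) (by norm_num)
        (by nlinarith [hr2ge])
    linarith
  -- Lyapunov descent
  have hlyap : ∀ t, t < n → S (t+1) + c (t+1) * D (t+1) ≤ S t + c t * D t := by
    intro t ht
    have h1 := hstepS t ht
    have h2 := mul_le_mul_of_nonneg_left (hstepD t ht) (hcnn (t+1))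
    have h3 := hcrec t ht
    have h4 : (-η + L * η ^ 2 / 2 + c (t+1) * (η / β + η ^ 2)) * N t ≤ 0 :=
      mul_nonpos_of_nonpos_of_nonneg (hcoef (t+1)) (hNnn t)
    have hγeq : (L * η ^ 2 / 2) * L ^ 2 = γ := by rw [hγ]; ring
    nlinarith [h1, h2, h3, h4, hDnn t, hNnn t]
  -- initial values
  have hS0 : S 0 = (n:ℝ) ^ n * F xtilde := by
    simp only [hS, hX0]
    rw [Finset.sum_const, Finset.card_univ, Fintype.card_fun, Fintype.card_fin,
      nsmul_eq_mul, Nat.cast_pow]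
  have hD0 : D 0 = 0 := by simp [hD, hX0]
  have hmain : ∀ j, j ≤ n → S j + c j * D j ≤ (n:ℝ) ^ n * F xtilde := by
    intro j
    induction j with
    | zero =>
      intro _
      rw [hS0, hD0]
      simp
    | succ j ih =>
      intro hj
      exact le_trans (hlyap j (by omega)) (ih (by omega))
  intro j hj
  have h1 := hmain j hj
  have h2 : 0 ≤ c j * D j := mul_nonneg (hcnn j) (hDnn j)
  have h3 : S j ≤ (n:ℝ) ^ n * F xtilde := by linarith
  have hp : (0:ℝ) < (n:ℝ) ^ n := by positivity
  have hgoal : (1 / (n:ℝ) ^ n) * S j ≤ F xtilde := by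
    calc (1 / (n:ℝ) ^ n) * S j
        ≤ (1 / (n:ℝ) ^ n) * ((n:ℝ) ^ n * F xtilde) :=
          mul_le_mul_of_nonneg_left h3 (by positivity)
      _ = F xtilde := by field_simp
  simpa only [hS] using hgoal
end

section
/- Let f : ℝ^d → ℝ be twice continuously differentiable with M-Lipschitz Hessian (M > 0), fix x ∈ ℝ^d and γ > 0 with ρ ∈ (0,1]. Let V be a random vector on a probability space taking values in the unit sphere of ℝ^d, and suppose that with probability at least ρ, ⟨V, ∇²f(x) V⟩ ≤ −γ/2. For a unit vector v define α(v) = |⟨v, ∇²f(x) v⟩|/M and u(v) = x − α(v)·v if ⟨∇f(x), v⟩ ≥ 0 and u(v) = x + α(v)·v otherwise, and let Y(v) be a point with f(Y(v)) = min(f(u(v)), f(x)). Then E[f(Y(V))] ≤ f(x) − (ρ/(24 M²)) γ³. -/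
set_option maxHeartbeats 1000000 in
theorem taylor3aux {d : ℕ} (f : EuclideanSpace ℝ (Fin d) → ℝ) (M : ℝ)
    (hf : ContDiff ℝ 2 f)
    (hlip : ∀ a b, ‖fderiv ℝ (fderiv ℝ f) a - fderiv ℝ (fderiv ℝ f) b‖ ≤ M * ‖a - b‖)
    (x h : EuclideanSpace ℝ (Fin d)) :
    f (x + h) ≤ f x + fderiv ℝ f x h + fderiv ℝ (fderiv ℝ f) x h h / 2 + M * ‖h‖ ^ 3 / 6 := by
  set g := fderiv ℝ f with hg_def
  set H := fderiv ℝ g with hH_def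
  have hg : ContDiff ℝ 1 g := hf.fderiv_right (by norm_num)
  have hfd : Differentiable ℝ f := hf.differentiable (by norm_num)
  have hgd : Differentiable ℝ g := hg.differentiable (by norm_num)
  -- the line
  have hline : ∀ t : ℝ, HasDerivAt (fun s : ℝ => x + s • h) h t := by
    intro t
    simpa using ((hasDerivAt_id t).smul_const h).const_add x
  set A : ℝ → ℝ := fun t => g (x + t • h) h with hA_def
  set B : ℝ → ℝ := fun t => H (x + t • h) h h with hB_def
  have hA : ∀ t : ℝ, HasDerivAt (fun s => f (x + s • h)) (A t) t := by
    intro t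
    exact ((hfd (x + t • h)).hasFDerivAt.comp_hasDerivAt t (hline t))
  have hB : ∀ t : ℝ, HasDerivAt A (B t) t := by
    intro t
    have h1 : HasDerivAt (fun s => g (x + s • h)) (H (x + t • h) h) t :=
      ((hgd (x + t • h)).hasFDerivAt.comp_hasDerivAt t (hline t))
    have := h1.clm_apply (hasDerivAt_const t h)
    simpa using this
  set ψ : ℝ → ℝ := fun t =>
    f x + t * A 0 + t ^ 2 * B 0 / 2 + M * ‖h‖ ^ 3 * t ^ 3 / 6 - f (x + t • h) with hψ_def
  set ψ' : ℝ → ℝ := fun t => A 0 + t * B 0 + M * ‖h‖ ^ 3 * t ^ 2 / 2 - A t with hψ'_def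
  have hψ'at : ∀ t, HasDerivAt ψ (ψ' t) t := by
    intro t
    have hp : HasDerivAt (fun t : ℝ =>
        f x + t * A 0 + t ^ 2 * B 0 / 2 + M * ‖h‖ ^ 3 * t ^ 3 / 6)
        (A 0 + t * B 0 + M * ‖h‖ ^ 3 * t ^ 2 / 2) t := by
      have : HasDerivAt (fun t : ℝ =>
          f x + t * A 0 + t ^ 2 * B 0 / 2 + M * ‖h‖ ^ 3 * t ^ 3 / 6)
          (0 + (1 * A 0) + (2 * t ^ 1 * B 0) / 2 + M * ‖h‖ ^ 3 * (3 * t ^ 2) / 6) t := by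
        exact (((hasDerivAt_const t (f x)).add ((hasDerivAt_id t).mul_const (A 0))).add
            (((hasDerivAt_pow 2 t).mul_const (B 0)).div_const 2)).add
            (((hasDerivAt_pow 3 t).const_mul (M * ‖h‖ ^ 3)).div_const 6)
      convert this using 1
      ring
    exact hp.sub (hA t)
  have hψ''at : ∀ t, HasDerivAt ψ' (B 0 + M * ‖h‖ ^ 3 * t - B t) t := by
    intro t
    have hp : HasDerivAt (fun t : ℝ => A 0 + t * B 0 + M * ‖h‖ ^ 3 * t ^ 2 / 2)
        (B 0 + M * ‖h‖ ^ 3 * t) t := by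
      have : HasDerivAt (fun t : ℝ => A 0 + t * B 0 + M * ‖h‖ ^ 3 * t ^ 2 / 2)
          (0 + 1 * B 0 + M * ‖h‖ ^ 3 * (2 * t ^ 1) / 2) t :=
        ((hasDerivAt_const t (A 0)).add ((hasDerivAt_id t).mul_const (B 0))).add
          (((hasDerivAt_pow 2 t).const_mul (M * ‖h‖ ^ 3)).div_const 2)
      convert this using 1
      ring
    exact hp.sub (hB t)
  have hBbound : ∀ t : ℝ, 0 ≤ t → B t - B 0 ≤ M * ‖h‖ ^ 3 * t := by
    intro t ht
    have h1 : B t - B 0 = ((H (x + t • h) - H x) h) h := by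
      simp [hB_def]
    have h2 : ((H (x + t • h) - H x) h) h ≤ ‖(H (x + t • h) - H x) h‖ * ‖h‖ := by
      calc ((H (x + t • h) - H x) h) h ≤ ‖((H (x + t • h) - H x) h) h‖ := le_abs_self _
        _ ≤ ‖(H (x + t • h) - H x) h‖ * ‖h‖ := ((H (x + t • h) - H x) h).le_opNorm h
    have h3 : ‖(H (x + t • h) - H x) h‖ ≤ ‖H (x + t • h) - H x‖ * ‖h‖ :=
      (H (x + t • h) - H x).le_opNorm h
    have h4 : ‖H (x + t • h) - H x‖ ≤ M * (t * ‖h‖) := by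
      have := hlip (x + t • h) x
      simpa [norm_smul, abs_of_nonneg ht] using this
    have hhn : (0:ℝ) ≤ ‖h‖ := norm_nonneg h
    have h5 := mul_le_mul_of_nonneg_right h3 hhn
    have h6 := mul_le_mul_of_nonneg_right h4 (mul_nonneg hhn hhn)
    nlinarith [norm_nonneg ((H (x + t • h) - H x) h)]
  -- ψ' is monotone on [0,1]
  have hψ'mono : MonotoneOn ψ' (Set.Icc 0 1) := by
    apply monotoneOn_of_deriv_nonneg (convex_Icc 0 1)
    · exact fun t _ => (hψ''at t).continuousAt.continuousWithinAt
    · exact fun t _ => ((hψ''at t).differentiableAt).differentiableWithinAt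
    · intro t ht
      rw [interior_Icc] at ht
      rw [(hψ''at t).deriv]
      have := hBbound t ht.1.le
      linarith
  have hψ'0 : ψ' 0 = 0 := by simp [hψ'_def]
  have hψmono : MonotoneOn ψ (Set.Icc 0 1) := by
    apply monotoneOn_of_deriv_nonneg (convex_Icc 0 1)
    · exact fun t _ => (hψ'at t).continuousAt.continuousWithinAt
    · exact fun t _ => ((hψ'at t).differentiableAt).differentiableWithinAt
    · intro t ht
      rw [interior_Icc] at ht
      rw [(hψ'at t).deriv]
      have := hψ'mono (Set.left_mem_Icc.2 one_pos.le) ⟨ht.1.le, ht.2.le⟩ ht.1.le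
      rw [hψ'0] at this
      exact this
  have key : ψ 0 ≤ ψ 1 := hψmono (Set.left_mem_Icc.2 one_pos.le) (Set.right_mem_Icc.2 one_pos.le) one_pos.le
  have e0 : x + (0:ℝ) • h = x := by rw [zero_smul, add_zero]
  have e1 : x + (1:ℝ) • h = x + h := by rw [one_smul]
  have hψ0 : ψ 0 = 0 := by
    simp only [hψ_def, e0]; ring
  rw [hψ0] at key
  simp only [hψ_def, hA_def, hB_def, e0, e1, one_pow, one_mul] at key
  linarith


set_option maxHeartbeats 1000000 in
open MeasureTheory in
/-- Lemma 2: HessianDescent, which with probability at least `ρ` finds a unit direction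
of curvature at most `-γ/2`, decreases the objective in expectation by at least
`(ρ/(24 M²)) γ³`. -/
theorem stmt4 {d : ℕ} (f : EuclideanSpace ℝ (Fin d) → ℝ) (M : ℝ) (hM : 0 < M)
    (hf : ContDiff ℝ 2 f)
    (hlip : ∀ a b, ‖fderiv ℝ (fderiv ℝ f) a - fderiv ℝ (fderiv ℝ f) b‖ ≤ M * ‖a - b‖)
    (x : EuclideanSpace ℝ (Fin d)) (γ ρ : ℝ) (hγ : 0 < γ) (hρ : 0 < ρ) (hρ1 : ρ ≤ 1)
    {Ω : Type*} [MeasurableSpace Ω] (μ : Measure Ω) [IsProbabilityMeasure μ]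
    (V : Ω → EuclideanSpace ℝ (Fin d)) (hV : ∀ ω, ‖V ω‖ = 1)
    (hprob : ENNReal.ofReal ρ ≤ μ {ω | fderiv ℝ (fderiv ℝ f) x (V ω) (V ω) ≤ -γ / 2})
    (α : EuclideanSpace ℝ (Fin d) → ℝ)
    (hα : ∀ v, α v = |fderiv ℝ (fderiv ℝ f) x v v| / M)
    (u : EuclideanSpace ℝ (Fin d) → EuclideanSpace ℝ (Fin d))
    (hu : ∀ v, u v = if 0 ≤ (inner ℝ (gradient f x) v : ℝ) then x - α v • v else x + α v • v)
    (Y : EuclideanSpace ℝ (Fin d) → EuclideanSpace ℝ (Fin d))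
    (hY : ∀ v, ‖v‖ = 1 → f (Y v) = min (f (u v)) (f x))
    (hint : Integrable (fun ω => f (Y (V ω))) μ) :
    ∫ ω, f (Y (V ω)) ∂μ ≤ f x - ρ / (24 * M ^ 2) * γ ^ 3 := by
  have taylor3 : ∀ x h : EuclideanSpace ℝ (Fin d),
      f (x + h) ≤ f x + fderiv ℝ f x h + fderiv ℝ (fderiv ℝ f) x h h / 2 + M * ‖h‖ ^ 3 / 6 :=
    taylor3aux f M hf hlip
  have grad_eq : ∀ v : EuclideanSpace ℝ (Fin d),
      (inner ℝ (gradient f x) v : ℝ) = fderiv ℝ f x v := fun v =>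
    InnerProductSpace.toDual_symm_apply
  set c : ℝ := γ ^ 3 / (24 * M ^ 2) with hc_def
  have hc : 0 < c := by positivity
  -- pointwise bound on the good set
  have key : ∀ v : EuclideanSpace ℝ (Fin d), ‖v‖ = 1 →
      fderiv ℝ (fderiv ℝ f) x v v ≤ -γ / 2 → f (Y v) ≤ f x - c := by
    intro v hv hq
    set q : ℝ := fderiv ℝ (fderiv ℝ f) x v v with hq_def
    have hqneg : q < 0 := lt_of_le_of_lt hq (by linarith)
    have hαv : α v = -q / M := by rw [hα, ← hq_def, abs_of_neg hqneg]
    have hαnn : 0 ≤ α v := by rw [hαv]; exact div_nonneg (by linarith) hM.le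
    set cc : ℝ := if 0 ≤ (inner ℝ (gradient f x) v : ℝ) then -(α v) else α v with hcc_def
    have huv : u v = x + cc • v := by
      rw [hu, hcc_def]
      split_ifs with h
      · rw [neg_smul, ← sub_eq_add_neg]
      · rfl
    have habs : |cc| = α v := by
      rw [hcc_def]; split_ifs <;> simp [abs_of_nonneg hαnn]
    have hT := taylor3 x (cc • v)
    rw [← huv] at hT
    have e1 : fderiv ℝ f x (cc • v) = cc * fderiv ℝ f x v := by
      rw [(fderiv ℝ f x).map_smul]; rfl
    have e2 : fderiv ℝ (fderiv ℝ f) x (cc • v) (cc • v) = cc * cc * q := by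
      rw [(fderiv ℝ (fderiv ℝ f) x).map_smul]
      simp only [ContinuousLinearMap.smul_apply, ContinuousLinearMap.map_smul, smul_eq_mul,
        ← hq_def]
      ring
    have e3 : ‖cc • v‖ = α v := by rw [norm_smul, hv, mul_one, Real.norm_eq_abs, habs]
    have eterm : cc * fderiv ℝ f x v ≤ 0 := by
      rw [hcc_def]
      split_ifs with h
      · rw [grad_eq] at h
        have : 0 ≤ α v * fderiv ℝ f x v := mul_nonneg hαnn h
        nlinarith
      · push_neg at h
        rw [grad_eq] at h
        nlinarith [mul_nonneg hαnn (neg_nonneg.2 h.le)]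
    have hccsq : cc * cc = α v * α v := by
      have : cc * cc = |cc| * |cc| := by rw [← abs_mul, abs_mul_self]
      rw [this, habs]
    rw [e1, e2, e3, hccsq] at hT
    have hfu : f (u v) ≤ f x + (α v * α v) * q / 2 + M * (α v) ^ 3 / 6 := by linarith
    have hq3 : q ^ 3 ≤ -(γ / 2) ^ 3 := by nlinarith [sq_nonneg (q + γ / 2), sq_nonneg (q - γ / 2)]
    have hbound : f (u v) ≤ f x - c := by
      rw [hαv] at hfu
      have expand : -q / M * (-q / M) * q / 2 + M * (-q / M) ^ 3 / 6 = q ^ 3 / (3 * M ^ 2) := by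
        field_simp; ring
      have hfu2 : f (u v) ≤ f x + q ^ 3 / (3 * M ^ 2) := by linarith [expand]
      have h8 : q ^ 3 ≤ -(γ ^ 3) / 8 := by nlinarith
      have h9 := (div_le_div_iff_of_pos_right (show (0:ℝ) < 3 * M ^ 2 by positivity)).2 h8
      have h10 : -(γ ^ 3) / 8 / (3 * M ^ 2) = -(γ ^ 3 / (24 * M ^ 2)) := by ring
      rw [hc_def]; linarith
    rw [hY v hv]
    exact le_trans (min_le_left _ _) hbound
  -- integration
  set φ : Ω → ℝ := fun ω => f x - f (Y (V ω)) with hφ_def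
  have hφnn : ∀ ω, 0 ≤ φ ω := by
    intro ω
    have := hY (V ω) (hV ω)
    have h2 : f (Y (V ω)) ≤ f x := by rw [this]; exact min_le_right _ _
    simp [hφ_def]; linarith
  have hφint : Integrable φ μ := (integrable_const (f x)).sub hint
  have hmeas : AEMeasurable (fun ω => ENNReal.ofReal (φ ω)) μ :=
    ENNReal.measurable_ofReal.comp_aemeasurable hφint.aestronglyMeasurable.aemeasurable
  have hsub : {ω | fderiv ℝ (fderiv ℝ f) x (V ω) (V ω) ≤ -γ / 2} ⊆
      {ω | ENNReal.ofReal c ≤ ENNReal.ofReal (φ ω)} := by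
    intro ω hω
    have := key (V ω) (hV ω) hω
    exact ENNReal.ofReal_le_ofReal (by simp [hφ_def]; linarith)
  have h1 : ENNReal.ofReal c * ENNReal.ofReal ρ ≤ ∫⁻ ω, ENNReal.ofReal (φ ω) ∂μ := by
    calc ENNReal.ofReal c * ENNReal.ofReal ρ
        ≤ ENNReal.ofReal c * μ {ω | ENNReal.ofReal c ≤ ENNReal.ofReal (φ ω)} :=
          mul_le_mul' le_rfl (le_trans hprob (measure_mono hsub))
      _ ≤ ∫⁻ ω, ENNReal.ofReal (φ ω) ∂μ := mul_meas_ge_le_lintegral₀ hmeas _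
  have h2 : ∫⁻ ω, ENNReal.ofReal (φ ω) ∂μ = ENNReal.ofReal (∫ ω, φ ω ∂μ) :=
    (MeasureTheory.ofReal_integral_eq_lintegral_ofReal hφint
      (Filter.Eventually.of_forall hφnn)).symm
  rw [h2, ← ENNReal.ofReal_mul hc.le] at h1
  have h3 : c * ρ ≤ ∫ ω, φ ω ∂μ := by
    have := (ENNReal.ofReal_le_ofReal_iff (integral_nonneg hφnn)).1 h1
    exact this
  have h4 : ∫ ω, φ ω ∂μ = f x - ∫ ω, f (Y (V ω)) ∂μ := by
    rw [hφ_def, integral_sub (integrable_const (f x)) hint, integral_const]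
    simp
  rw [h4] at h3
  have : ρ / (24 * M ^ 2) * γ ^ 3 = c * ρ := by rw [hc_def]; ring
  linarith
end

section
/- Let f : ℝ^d → ℝ be twice continuously differentiable with M-Lipschitz Hessian (M > 0), let x ∈ ℝ^d, γ > 0, and let v ∈ ℝ^d be a unit vector with ⟨v, ∇²f(x) v⟩ ≤ −γ/2. Set α = |⟨v, ∇²f(x) v⟩|/M and u = x − α·v if ⟨∇f(x), v⟩ ≥ 0, u = x + α·v otherwise. Then f(u) ≤ f(x) − (1/(3M²)) |⟨v, ∇²f(x) v⟩|³ ≤ f(x) − γ³/(24 M²). -/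
open Set in

theorem taylor_ub {d : ℕ} (f : EuclideanSpace ℝ (Fin d) → ℝ) (M : ℝ) (hM : 0 < M)
    (hf : ContDiff ℝ 2 f)
    (hlip : ∀ a b, ‖fderiv ℝ (fderiv ℝ f) a - fderiv ℝ (fderiv ℝ f) b‖ ≤ M * ‖a - b‖)
    (x h : EuclideanSpace ℝ (Fin d)) :
    f (x + h) ≤ f x + fderiv ℝ f x h + (1/2) * fderiv ℝ (fderiv ℝ f) x h h + M/6 * ‖h‖^3 := by
  set F := fderiv ℝ f with hF
  set F2 := fderiv ℝ F with hF2
  have hfd : Differentiable ℝ f := hf.differentiable (by norm_num)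
  have hF1 : ContDiff ℝ 1 F := hf.fderiv_right (by norm_num)
  have hFd : Differentiable ℝ F := hF1.differentiable (by norm_num)
  set c : ℝ → EuclideanSpace ℝ (Fin d) := fun t => x + t • h with hc
  have hcd : ∀ t : ℝ, HasDerivAt c h t := by
    intro t
    show HasDerivAt (fun t : ℝ => x + t • h) h t
    simpa using ((hasDerivAt_id t).smul_const h).const_add x
  have hc0 : c 0 = x := by simp [hc]
  have hg : ∀ t : ℝ, HasDerivAt (fun t => f (c t)) (F (c t) h) t := fun t =>
    (hfd (c t)).hasFDerivAt.comp_hasDerivAt t (hcd t)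
  have hg1 : ∀ t : ℝ, HasDerivAt (fun t => F (c t) h) (F2 (c t) h h) t := by
    intro t
    have h1 : HasDerivAt (fun t => F (c t)) (F2 (c t) h) t :=
      (hFd (c t)).hasFDerivAt.comp_hasDerivAt t (hcd t)
    have := h1.clm_apply (hasDerivAt_const t h)
    simpa using this
  -- curvature difference bound
  have hcurv : ∀ s : ℝ, 0 ≤ s → F2 (c s) h h - F2 x h h ≤ M * s * ‖h‖^3 := by
    intro s hs
    have e1 : F2 (c s) h h - F2 x h h = ((F2 (c s) - F2 x) h) h := by simp
    have e2 : ‖((F2 (c s) - F2 x) h) h‖ ≤ ‖F2 (c s) - F2 x‖ * ‖h‖ * ‖h‖ := by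
      calc ‖((F2 (c s) - F2 x) h) h‖ ≤ ‖(F2 (c s) - F2 x) h‖ * ‖h‖ :=
            ContinuousLinearMap.le_opNorm _ h
        _ ≤ ‖F2 (c s) - F2 x‖ * ‖h‖ * ‖h‖ := by
            gcongr; exact ContinuousLinearMap.le_opNorm _ h
    have e3 : ‖F2 (c s) - F2 x‖ ≤ M * (s * ‖h‖) := by
      have := hlip (c s) x
      simpa [hc, norm_smul, abs_of_nonneg hs] using this
    have : ((F2 (c s) - F2 x) h) h ≤ ‖((F2 (c s) - F2 x) h) h‖ := le_abs_self _
    rw [e1]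
    calc ((F2 (c s) - F2 x) h) h ≤ ‖F2 (c s) - F2 x‖ * ‖h‖ * ‖h‖ := this.trans e2
      _ ≤ (M * (s * ‖h‖)) * ‖h‖ * ‖h‖ := by gcongr
      _ = M * s * ‖h‖^3 := by ring
  set B : ℝ → ℝ := fun s => F (c s) h - F x h - s * (F2 x h h) - M * s^2 * ‖h‖^3 / 2 with hB
  have hBd : ∀ s : ℝ, HasDerivAt B (F2 (c s) h h - F2 x h h - M * s * ‖h‖^3) s := by
    intro s
    have h2 : HasDerivAt (fun s : ℝ => F x h + s * (F2 x h h) + M * s^2 * ‖h‖^3 / 2)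
        (F2 x h h + M * s * ‖h‖^3) s := by
      have ha : HasDerivAt (fun s : ℝ => s * (F2 x h h)) (F2 x h h) s := by
        simpa using (hasDerivAt_id s).mul_const (F2 x h h)
      have hb : HasDerivAt (fun s : ℝ => M * s^2 * ‖h‖^3 / 2) (M * s * ‖h‖^3) s := by
        have : HasDerivAt (fun s : ℝ => s^2) (2 * s) s := by
          simpa using hasDerivAt_pow 2 s
        have := ((this.const_mul M).mul_const (‖h‖^3)).div_const 2
        exact this.congr_deriv (by ring)
      exact (ha.const_add (F x h)).add hb
    have : HasDerivAt (fun t : ℝ => F (c t) h - (F x h + t * (F2 x h h) + M * t^2 * ‖h‖^3 / 2))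
        (F2 (c s) h h - (F2 x h h + M * s * ‖h‖^3)) s := (hg1 s).sub h2
    convert this using 1
    · funext t; simp [hB]; ring
    · ring
  have hBanti : AntitoneOn B (Icc 0 1) := by
    apply antitoneOn_of_deriv_nonpos (convex_Icc 0 1)
    · exact fun s _ => ((hBd s).continuousAt).continuousWithinAt
    · exact fun s _ => ((hBd s).differentiableAt).differentiableWithinAt
    · intro s hs
      rw [interior_Icc] at hs
      rw [(hBd s).deriv]
      have := hcurv s hs.1.le
      linarith
  have hB0 : B 0 = 0 := by simp [hB, hc0]
  have hBle : ∀ s ∈ Icc (0:ℝ) 1, B s ≤ 0 := by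
    intro s hs
    have := hBanti (left_mem_Icc.2 one_pos.le) hs hs.1
    simpa [hB0] using this
  set A : ℝ → ℝ := fun t => f (c t) - f x - t * F x h - t^2/2 * F2 x h h - M * t^3 * ‖h‖^3 / 6 with hA
  have hAd : ∀ t : ℝ, HasDerivAt A (B t) t := by
    intro t
    have h2 : HasDerivAt (fun t : ℝ => f x + t * F x h + t^2/2 * F2 x h h + M * t^3 * ‖h‖^3 / 6)
        (F x h + t * F2 x h h + M * t^2 * ‖h‖^3 / 2) t := by
      have ha : HasDerivAt (fun t : ℝ => t * F x h) (F x h) t := by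
        simpa using (hasDerivAt_id t).mul_const (F x h)
      have hb : HasDerivAt (fun t : ℝ => t^2/2 * F2 x h h) (t * F2 x h h) t := by
        have : HasDerivAt (fun t : ℝ => t^2) (2 * t) t := by simpa using hasDerivAt_pow 2 t
        have := (this.div_const 2).mul_const (F2 x h h)
        exact this.congr_deriv (by ring)
      have hcc : HasDerivAt (fun t : ℝ => M * t^3 * ‖h‖^3 / 6) (M * t^2 * ‖h‖^3 / 2) t := by
        have : HasDerivAt (fun t : ℝ => t^3) (3 * t^2) t := by simpa using hasDerivAt_pow 3 t
        have := ((this.const_mul M).mul_const (‖h‖^3)).div_const 6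
        exact this.congr_deriv (by ring)
      exact ((ha.const_add (f x)).add hb).add hcc
    have : HasDerivAt (fun t : ℝ => f (c t) - (f x + t * F x h + t^2/2 * F2 x h h + M * t^3 * ‖h‖^3 / 6))
        (F (c t) h - (F x h + t * F2 x h h + M * t^2 * ‖h‖^3 / 2)) t := (hg t).sub h2
    convert this using 1
    · funext s; simp [hA]; ring
    · simp [hB]; ring
  have hAanti : AntitoneOn A (Icc 0 1) := by
    apply antitoneOn_of_deriv_nonpos (convex_Icc 0 1)
    · exact fun s _ => ((hAd s).continuousAt).continuousWithinAt
    · exact fun s _ => ((hAd s).differentiableAt).differentiableWithinAt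
    · intro s hs
      rw [interior_Icc] at hs
      rw [(hAd s).deriv]
      exact hBle s ⟨hs.1.le, hs.2.le⟩
  have hA0 : A 0 = 0 := by simp [hA, hc0]
  have hA1 : A 1 ≤ 0 := by
    have := hAanti (left_mem_Icc.2 one_pos.le) (right_mem_Icc.2 one_pos.le) zero_le_one
    simpa [hA0] using this
  have hc1 : c 1 = x + h := by simp [hc]
  simp only [hA, hc1] at hA1
  nlinarith [hA1]


/-- Eq. (19) in the proof of Lemma 2: a single HessianDescent step along a unit
direction of curvature at most `-γ/2` decreases the objective by at least
`γ³/(24 M²)`. -/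
theorem stmt5 {d : ℕ} (f : EuclideanSpace ℝ (Fin d) → ℝ) (M : ℝ) (hM : 0 < M)
    (hf : ContDiff ℝ 2 f)
    (hlip : ∀ a b, ‖fderiv ℝ (fderiv ℝ f) a - fderiv ℝ (fderiv ℝ f) b‖ ≤ M * ‖a - b‖)
    (x v : EuclideanSpace ℝ (Fin d)) (γ : ℝ) (hγ : 0 < γ) (hv : ‖v‖ = 1)
    (hneg : fderiv ℝ (fderiv ℝ f) x v v ≤ -γ / 2)
    (α : ℝ) (hα : α = |fderiv ℝ (fderiv ℝ f) x v v| / M)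
    (u : EuclideanSpace ℝ (Fin d))
    (hu : u = if 0 ≤ (inner ℝ (gradient f x) v : ℝ) then x - α • v else x + α • v) :
    f u ≤ f x - 1 / (3 * M ^ 2) * |fderiv ℝ (fderiv ℝ f) x v v| ^ 3 ∧
      f x - 1 / (3 * M ^ 2) * |fderiv ℝ (fderiv ℝ f) x v v| ^ 3 ≤ f x - γ ^ 3 / (24 * M ^ 2) := by
  set lam := fderiv ℝ (fderiv ℝ f) x v v with hlam
  have hlamneg : lam < 0 := lt_of_le_of_lt hneg (by linarith)
  have habs : |lam| = -lam := abs_of_neg hlamneg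
  have hαpos : 0 < α := by
    have h0 : (0:ℝ) < -lam := by linarith
    rw [hα, habs]; exact div_pos h0 hM
  have hgradv : (inner ℝ (gradient f x) v : ℝ) = fderiv ℝ f x v := by
    rw [gradient, InnerProductSpace.toDual_symm_apply]
  -- choose the step h
  set s : ℝ := if 0 ≤ (inner ℝ (gradient f x) v : ℝ) then -α else α with hs
  have hu' : u = x + s • v := by
    rw [hu, hs]
    split_ifs <;> simp [sub_eq_add_neg, neg_smul]
  have hnorms : ‖s • v‖ = α := by
    rw [norm_smul, hv, mul_one, hs]
    split_ifs <;> simp [abs_of_pos hαpos, abs_of_neg (neg_neg_iff_pos.2 hαpos)]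
  have hlin : fderiv ℝ f x (s • v) ≤ 0 := by
    rw [map_smul, smul_eq_mul, ← hgradv, hs]
    split_ifs with hsign
    · exact mul_nonpos_of_nonpos_of_nonneg (by linarith) hsign
    · exact mul_nonpos_of_nonneg_of_nonpos hαpos.le (by linarith [hsign])
  have hquad : fderiv ℝ (fderiv ℝ f) x (s • v) (s • v) = s^2 * lam := by
    rw [map_smul]
    simp [smul_smul, hlam]
    ring
  have hs2 : s^2 = α^2 := by rw [hs]; split_ifs <;> ring
  have key := taylor_ub f M hM hf hlip x (s • v)
  rw [← hu', hnorms, hquad, hs2] at key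
  have hαM : α * M = -lam := by
    rw [hα, habs, div_mul_cancel₀]
    exact ne_of_gt hM
  constructor
  · have h1 : f u ≤ f x + (1/2) * (α^2 * lam) + M/6 * α^3 := by linarith
    rw [habs]
    have e : (1/2) * (α^2 * lam) + M/6 * α^3 = - (1 / (3 * M ^ 2) * (-lam)^3) := by
      have hα' : α = -lam / M := by rw [hα, habs]
      rw [hα']
      field_simp
      ring
    linarith
  · have h2 : γ/2 ≤ |lam| := by rw [habs]; linarith
    have h3 : (γ/2)^3 ≤ |lam|^3 := by
      apply pow_le_pow_left₀ (by positivity) h2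
    have h4 : γ^3/(24*M^2) ≤ 1/(3*M^2) * |lam|^3 := by
      rw [div_le_iff₀ (by positivity)]
      have e : (1/(3*M^2) * |lam|^3) * (24*M^2) = 8 * |lam|^3 := by field_simp; ring
      rw [e]; nlinarith [h3]
    linarith
end

section
/- Let f : ℝ^d → ℝ be twice continuously differentiable with M-Lipschitz Hessian (M ≥ 0), fix x ∈ ℝ^d, and define the cubic model m_x(z) = f(x) + ⟨∇f(x), z − x⟩ + (1/2)⟨z − x, ∇²f(x)(z − x)⟩ + (M/6)‖z − x‖³. If y ∈ ℝ^d is a global minimizer of m_x, then f(y) ≤ m_x(y) ≤ m_x(x) = f(x); in particular the cubic regularization step never increases the objective value: f(y) ≤ f(x). -/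
/-- One-dimensional second-order Taylor comparison: if `φ''` grows at most linearly
from its value at `0`, then `φ 1` is bounded by the cubic model. -/
lemma taylor2_aux (φ φ' φ'' : ℝ → ℝ) (L : ℝ)
    (hφ : ∀ t, HasDerivAt φ (φ' t) t) (hφ' : ∀ t, HasDerivAt φ' (φ'' t) t)
    (hL : ∀ t ∈ Set.Icc (0:ℝ) 1, φ'' t - φ'' 0 ≤ L * t) :
    φ 1 ≤ φ 0 + φ' 0 + (1/2) * φ'' 0 + L/6 := by
  set e : ℝ → ℝ := fun t => φ t - φ 0 - t * φ' 0 - t^2/2 * φ'' 0 - L/6 * t^3 with he_def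
  set e' : ℝ → ℝ := fun t => φ' t - φ' 0 - t * φ'' 0 - L/2 * t^2 with he'_def
  have he : ∀ t, HasDerivAt e (e' t) t := by
    intro t
    have h1 : HasDerivAt (fun t : ℝ => t * φ' 0) (φ' 0) t := by
      simpa using (hasDerivAt_id t).mul_const (φ' 0)
    have h2 : HasDerivAt (fun t : ℝ => t^2/2 * φ'' 0) (t * φ'' 0) t := by
      have := ((hasDerivAt_pow 2 t).div_const 2).mul_const (φ'' 0)
      simpa using this.congr_deriv (by ring)
    have h3 : HasDerivAt (fun t : ℝ => L/6 * t^3) (L/2 * t^2) t := by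
      have := (hasDerivAt_pow 3 t).const_mul (L/6)
      simpa using this.congr_deriv (by ring)
    have := (((hφ t).sub_const (φ 0)).sub h1).sub h2 |>.sub h3
    exact this
  have he' : ∀ t, HasDerivAt e' (φ'' t - φ'' 0 - L * t) t := by
    intro t
    have h1 : HasDerivAt (fun t : ℝ => t * φ'' 0) (φ'' 0) t := by
      simpa using (hasDerivAt_id t).mul_const (φ'' 0)
    have h2 : HasDerivAt (fun t : ℝ => L/2 * t^2) (L * t) t := by
      have := (hasDerivAt_pow 2 t).const_mul (L/2)
      simpa using this.congr_deriv (by ring)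
    have := (((hφ' t).sub_const (φ' 0)).sub h1).sub h2
    exact this
  have he'0 : e' 0 = 0 := by simp [he'_def]
  have hanti' : AntitoneOn e' (Set.Icc 0 1) := by
    apply antitoneOn_of_deriv_nonpos (convex_Icc 0 1)
    · exact fun t _ => (he' t).continuousAt.continuousWithinAt
    · exact fun t _ => (he' t).differentiableAt.differentiableWithinAt
    · intro t ht
      rw [interior_Icc] at ht
      rw [(he' t).deriv]
      have := hL t ⟨le_of_lt ht.1, le_of_lt ht.2⟩
      linarith
  have he'nonpos : ∀ t ∈ Set.Icc (0:ℝ) 1, e' t ≤ 0 := by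
    intro t ht
    have := hanti' (Set.left_mem_Icc.mpr zero_le_one) ht ht.1
    rw [he'0] at this
    exact this
  have hanti : AntitoneOn e (Set.Icc 0 1) := by
    apply antitoneOn_of_deriv_nonpos (convex_Icc 0 1)
    · exact fun t _ => (he t).continuousAt.continuousWithinAt
    · exact fun t _ => (he t).differentiableAt.differentiableWithinAt
    · intro t ht
      rw [interior_Icc] at ht
      rw [(he t).deriv]
      exact he'nonpos t ⟨le_of_lt ht.1, le_of_lt ht.2⟩
  have h10 : e 1 ≤ e 0 :=
    hanti (Set.left_mem_Icc.mpr zero_le_one) (Set.right_mem_Icc.mpr zero_le_one) zero_le_one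
  have h0 : e 0 = 0 := by simp [he_def]
  rw [h0] at h10
  simp only [he_def] at h10
  linarith [h10]

/-- Descent property of the CubicDescent subroutine (condition H.1): a global minimizer
`y` of the cubic-regularized model at `x` never increases the objective. -/
theorem stmt7 {d : ℕ} (f : EuclideanSpace ℝ (Fin d) → ℝ) (M : ℝ) (hM : 0 ≤ M)
    (hf : ContDiff ℝ 2 f)
    (hlip : ∀ a b, ‖fderiv ℝ (fderiv ℝ f) a - fderiv ℝ (fderiv ℝ f) b‖ ≤ M * ‖a - b‖)
    (x : EuclideanSpace ℝ (Fin d))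
    (mx : EuclideanSpace ℝ (Fin d) → ℝ)
    (hmx : ∀ z, mx z = f x + (inner ℝ (gradient f x) (z - x) : ℝ)
      + (1 / 2) * fderiv ℝ (fderiv ℝ f) x (z - x) (z - x) + (M / 6) * ‖z - x‖ ^ 3)
    (y : EuclideanSpace ℝ (Fin d)) (hy : ∀ z, mx y ≤ mx z) :
    f y ≤ mx y ∧ mx y ≤ mx x ∧ mx x = f x ∧ f y ≤ f x := by
  set v := y - x with hv
  set A := fderiv ℝ (fderiv ℝ f) with hA
  set c : ℝ → EuclideanSpace ℝ (Fin d) := fun t => x + t • v with hc_def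
  have hdf : Differentiable ℝ f := hf.differentiable (by norm_num)
  have hdf2 : Differentiable ℝ (fderiv ℝ f) :=
    (hf.fderiv_right (m := 1) (by norm_num)).differentiable (by norm_num)
  have hc : ∀ t, HasDerivAt c v t := by
    intro t
    have h := ((hasDerivAt_id t).smul_const v).const_add x
    rw [one_smul] at h
    exact h
  have hc0 : c 0 = x := by simp [hc_def]
  have hc1 : c 1 = y := by simp [hc_def, hv]
  have hφ : ∀ t, HasDerivAt (fun t => f (c t)) (fderiv ℝ f (c t) v) t := fun t =>
    (hdf (c t)).hasFDerivAt.comp_hasDerivAt t (hc t)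
  have hφ' : ∀ t, HasDerivAt (fun t => fderiv ℝ f (c t) v) (A (c t) v v) t := by
    intro t
    have hg : HasDerivAt (fun t => fderiv ℝ f (c t)) (A (c t) v) t :=
      (hdf2 (c t)).hasFDerivAt.comp_hasDerivAt t (hc t)
    have := hg.clm_apply (hasDerivAt_const t v)
    simpa using this
  have hL : ∀ t ∈ Set.Icc (0:ℝ) 1, A (c t) v v - A x v v ≤ (M * ‖v‖^3) * t := by
    intro t ht
    have hsub : A (c t) v v - A x v v = ((A (c t) - A x) v) v := by
      simp
    rw [hsub]
    have h1 : ((A (c t) - A x) v) v ≤ ‖((A (c t) - A x) v) v‖ := le_abs_self _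
    have h2 : ‖((A (c t) - A x) v) v‖ ≤ ‖(A (c t) - A x) v‖ * ‖v‖ :=
      ((A (c t) - A x) v).le_opNorm v
    have h3 : ‖(A (c t) - A x) v‖ ≤ ‖A (c t) - A x‖ * ‖v‖ :=
      (A (c t) - A x).le_opNorm v
    have h4 : ‖A (c t) - A x‖ ≤ M * ‖c t - x‖ := hlip (c t) x
    have h5 : ‖c t - x‖ = t * ‖v‖ := by
      simp [hc_def, norm_smul, abs_of_nonneg ht.1]
    have hv0 : (0:ℝ) ≤ ‖v‖ := norm_nonneg v
    rw [h5] at h4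
    calc ((A (c t) - A x) v) v ≤ ‖((A (c t) - A x) v) v‖ := h1
      _ ≤ ‖(A (c t) - A x) v‖ * ‖v‖ := h2
      _ ≤ (‖A (c t) - A x‖ * ‖v‖) * ‖v‖ := mul_le_mul_of_nonneg_right h3 hv0
      _ ≤ ((M * (t * ‖v‖)) * ‖v‖) * ‖v‖ := by gcongr
      _ = M * ‖v‖^3 * t := by ring
  have key := taylor2_aux (fun t => f (c t)) (fun t => fderiv ℝ f (c t) v)
    (fun t => A (c t) v v) (M * ‖v‖^3) hφ hφ' (by simpa [hc0] using hL)
  simp only [hc0, hc1] at key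
  have hgrad : (inner ℝ (gradient f x) v : ℝ) = fderiv ℝ f x v := by
    rw [gradient, InnerProductSpace.toDual_symm_apply]
  have hfy : f y ≤ mx y := by
    rw [hmx y, ← hv, hgrad]
    have : M / 6 * ‖v‖ ^ 3 = M * ‖v‖^3 / 6 := by ring
    rw [this]
    linarith [key]
  have hmxx : mx x = f x := by
    rw [hmx x]
    simp
  have hmxyx : mx y ≤ mx x := hy x
  exact ⟨hfy, hmxyx, hmxx, le_trans hfy (hmxyx.trans hmxx.le)⟩
end

section
/- Let n ≥ 1 and let f_1, ..., f_n : ℝ^d → ℝ each be differentiable with L-Lipschitz gradient (L ≥ 0), and let f = (1/n)∑_{i=1}^n f_i. Then for all x, x̃ ∈ ℝ^d, (1/n) ∑_{i=1}^n ‖∇f_i(x) − ∇f_i(x̃) + ∇f(x̃)‖² ≤ 2‖∇f(x)‖² + 2L²‖x − x̃‖². -/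
open Finset

lemma grad_avg {d n : ℕ} (f : Fin n → EuclideanSpace ℝ (Fin d) → ℝ)
    (hdiff : ∀ i, Differentiable ℝ (f i)) (y : EuclideanSpace ℝ (Fin d)) :
    gradient (fun z => (1 / (n : ℝ)) * ∑ i, f i z) y
      = (1 / (n : ℝ)) • ∑ i, gradient (f i) y := by
  have hsum : DifferentiableAt ℝ (fun z => ∑ i, f i z) y :=
    DifferentiableAt.fun_sum fun i _ => (hdiff i) y
  have h1 : fderiv ℝ (fun z => (1 / (n : ℝ)) * ∑ i, f i z) y
      = (1 / (n : ℝ)) • ∑ i, fderiv ℝ (f i) y := by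
    rw [fderiv_const_mul hsum, fderiv_fun_sum fun i _ => (hdiff i) y]
  simp only [gradient, h1, map_smul, map_sum]

/-- Lemma 3: variance bound for the SVRG gradient estimator
`vᵢ = ∇fᵢ(x) − ∇fᵢ(x̃) + ∇f(x̃)`. -/
theorem stmt8 {d n : ℕ} (hn : 1 ≤ n) (L : ℝ) (hL : 0 ≤ L)
    (f : Fin n → EuclideanSpace ℝ (Fin d) → ℝ)
    (hdiff : ∀ i, Differentiable ℝ (f i))
    (hlip : ∀ i, ∀ a b, ‖gradient (f i) a - gradient (f i) b‖ ≤ L * ‖a - b‖)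
    (F : EuclideanSpace ℝ (Fin d) → ℝ)
    (hF : F = fun y => (1 / (n : ℝ)) * ∑ i, f i y)
    (x xtilde : EuclideanSpace ℝ (Fin d)) :
    (1 / (n : ℝ)) * ∑ i, ‖gradient (f i) x - gradient (f i) xtilde + gradient F xtilde‖ ^ 2
      ≤ 2 * ‖gradient F x‖ ^ 2 + 2 * L ^ 2 * ‖x - xtilde‖ ^ 2 := by
  have hn0 : (0 : ℝ) < n := by exact_mod_cast Nat.lt_of_lt_of_le Nat.zero_lt_one hn
  set a : Fin n → EuclideanSpace ℝ (Fin d) :=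
    fun i => gradient (f i) x - gradient (f i) xtilde with ha
  have hFx : gradient F x = (1 / (n : ℝ)) • ∑ i, gradient (f i) x := by
    rw [hF]; exact grad_avg f hdiff x
  have hFxt : gradient F xtilde = (1 / (n : ℝ)) • ∑ i, gradient (f i) xtilde := by
    rw [hF]; exact grad_avg f hdiff xtilde
  set m : EuclideanSpace ℝ (Fin d) := (1 / (n : ℝ)) • ∑ i, a i with hm
  have hmd : gradient F x - gradient F xtilde = m := by
    rw [hFx, hFxt, hm, ha, ← smul_sub, ← Finset.sum_sub_distrib]
  -- rewrite each summand
  have hv : ∀ i, gradient (f i) x - gradient (f i) xtilde + gradient F xtilde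
      = (a i - m) + gradient F x := by
    intro i
    rw [ha, ← hmd]
    abel_nf
    ac_rfl
  -- pointwise bound
  have hpt : ∀ i, ‖a i - m + gradient F x‖ ^ 2
      ≤ 2 * ‖a i - m‖ ^ 2 + 2 * ‖gradient F x‖ ^ 2 := by
    intro i
    have h1 : ‖a i - m + gradient F x‖ ≤ ‖a i - m‖ + ‖gradient F x‖ := norm_add_le _ _
    have h2 : ‖a i - m + gradient F x‖ ^ 2 ≤ (‖a i - m‖ + ‖gradient F x‖) ^ 2 :=
      pow_le_pow_left₀ (norm_nonneg _) h1 2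
    nlinarith [sq_nonneg (‖a i - m‖ - ‖gradient F x‖)]
  -- variance ≤ second moment
  have hvarid : ∑ i, ‖a i - m‖ ^ 2 ≤ ∑ i, ‖a i‖ ^ 2 := by
    have hsm : ∑ i, a i = (n : ℝ) • m := by
      rw [hm, smul_smul]
      field_simp
      rw [one_smul]
    have hexp : ∀ i, ‖a i - m‖ ^ 2
        = ‖a i‖ ^ 2 - 2 * inner ℝ (a i) m + ‖m‖ ^ 2 := fun i => by
      rw [@norm_sub_sq_real]
    have hinner : ∑ i, (inner ℝ (a i) m : ℝ) = (n : ℝ) * ‖m‖ ^ 2 := by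
      rw [← sum_inner, hsm, real_inner_smul_left, real_inner_self_eq_norm_sq]
    calc ∑ i, ‖a i - m‖ ^ 2
        = ∑ i, ‖a i‖ ^ 2 - 2 * ((n : ℝ) * ‖m‖ ^ 2) + (n : ℝ) * ‖m‖ ^ 2 := by
          simp only [hexp]
          rw [Finset.sum_add_distrib, Finset.sum_sub_distrib, ← Finset.mul_sum, hinner,
            Finset.sum_const, card_univ, Fintype.card_fin, nsmul_eq_mul]
      _ ≤ ∑ i, ‖a i‖ ^ 2 := by nlinarith [norm_nonneg m, sq_nonneg ‖m‖]
  -- Lipschitz bound on second moment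
  have hlipb : ∑ i, ‖a i‖ ^ 2 ≤ (n : ℝ) * (L ^ 2 * ‖x - xtilde‖ ^ 2) := by
    calc ∑ i, ‖a i‖ ^ 2 ≤ ∑ _i : Fin n, L ^ 2 * ‖x - xtilde‖ ^ 2 := by
          apply Finset.sum_le_sum
          intro i _
          have := hlip i x xtilde
          nlinarith [norm_nonneg (a i), norm_nonneg (x - xtilde)]
      _ = (n : ℝ) * (L ^ 2 * ‖x - xtilde‖ ^ 2) := by
          rw [Finset.sum_const, card_univ, Fintype.card_fin, nsmul_eq_mul]
  -- put everything together
  have hsumv : ∑ i, ‖gradient (f i) x - gradient (f i) xtilde + gradient F xtilde‖ ^ 2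
      ≤ (n : ℝ) * (2 * ‖gradient F x‖ ^ 2 + 2 * L ^ 2 * ‖x - xtilde‖ ^ 2) := by
    calc ∑ i, ‖gradient (f i) x - gradient (f i) xtilde + gradient F xtilde‖ ^ 2
        = ∑ i, ‖a i - m + gradient F x‖ ^ 2 := by
          apply Finset.sum_congr rfl; intro i _; rw [hv i]
      _ ≤ ∑ i, (2 * ‖a i - m‖ ^ 2 + 2 * ‖gradient F x‖ ^ 2) :=
          Finset.sum_le_sum fun i _ => hpt i
      _ = 2 * ∑ i, ‖a i - m‖ ^ 2 + (n : ℝ) * (2 * ‖gradient F x‖ ^ 2) := by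
          rw [Finset.sum_add_distrib, ← Finset.mul_sum, Finset.sum_const, card_univ,
            Fintype.card_fin, nsmul_eq_mul]
      _ ≤ 2 * ((n : ℝ) * (L ^ 2 * ‖x - xtilde‖ ^ 2)) + (n : ℝ) * (2 * ‖gradient F x‖ ^ 2) := by
          have := le_trans hvarid hlipb
          linarith
      _ = (n : ℝ) * (2 * ‖gradient F x‖ ^ 2 + 2 * L ^ 2 * ‖x - xtilde‖ ^ 2) := by ring
  rw [div_mul_eq_mul_div, one_mul, div_le_iff₀ hn0] at *
  calc (∑ i, ‖gradient (f i) x - gradient (f i) xtilde + gradient F xtilde‖ ^ 2)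
      ≤ (n : ℝ) * (2 * ‖gradient F x‖ ^ 2 + 2 * L ^ 2 * ‖x - xtilde‖ ^ 2) := hsumv
    _ = (2 * ‖gradient F x‖ ^ 2 + 2 * L ^ 2 * ‖x - xtilde‖ ^ 2) * (n : ℝ) := by ring
end
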